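/- arXiv:1301.0214 — 3 statements merged into one kernel-verified Lean document; each statement's English description precedes it below -/
import Mathlib

section
/- Let τ : ℕ → ℂ be a multiplicative function satisfying the Hecke relation τ(p^{k+i}) = τ(p^k)τ(p^i) − τ(p^{k-1})τ(p^{i-1}) for all primes p and integers k, i ≥ 1. Fix a prime p and an integer ν ≥ 1, and for s with real part large define G_i(s) = Σ_{k≥0} τ(p^k)τ(p^{k+i}) p^{-ks}. Then as formal identities of convergent series, G_ν(s) = (τ(p^ν) − τ(p)τ(p^{ν-1})/(p^s+1)) · G_0(s). -/
open scoped Complex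

/-- Hecke recursion for the local factors: `G_ν(s) = (τ(p^ν) − τ(p)τ(p^{ν-1})/(p^s+1)) G_0(s)`. -/
theorem hecke_local_series (τ : ℕ → ℂ)
    (hmul : ∀ m n : ℕ, Nat.Coprime m n → τ (m * n) = τ m * τ n)
    (hHecke : ∀ q : ℕ, q.Prime → ∀ k i : ℕ, 1 ≤ k → 1 ≤ i →
      τ (q ^ (k + i)) = τ (q ^ k) * τ (q ^ i) - τ (q ^ (k - 1)) * τ (q ^ (i - 1)))
    (p : ℕ) (hp : p.Prime) (ν : ℕ) (hν : 1 ≤ ν) (s : ℂ)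
    (hsum : ∀ i : ℕ, Summable (fun k : ℕ => τ (p ^ k) * τ (p ^ (k + i)) * ((p : ℂ) ^ (-s)) ^ k))
    (hden : (p : ℂ) ^ s + 1 ≠ 0) :
    ∑' k : ℕ, τ (p ^ k) * τ (p ^ (k + ν)) * ((p : ℂ) ^ (-s)) ^ k
      = (τ (p ^ ν) - τ p * τ (p ^ (ν - 1)) / ((p : ℂ) ^ s + 1)) *
        ∑' k : ℕ, τ (p ^ k) * τ (p ^ k) * ((p : ℂ) ^ (-s)) ^ k := by
  by_cases h1 : τ 1 = 0
  · have hz : ∀ n, τ n = 0 := fun n => by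
      have h := hmul n 1 (Nat.coprime_one_right n)
      simpa [h1] using h
    simp [hz]
  · have hτ1 : τ 1 = 1 := by
      have h := hmul 1 1 (by norm_num)
      simp only [one_mul] at h
      have h2 : τ 1 * τ 1 = τ 1 * 1 := by rw [← h, mul_one]
      exact mul_left_cancel₀ h1 h2
    set x : ℂ := (p : ℂ) ^ (-s) with hxdef
    have hp0 : (p : ℂ) ≠ 0 := by
      exact_mod_cast Nat.cast_ne_zero.mpr hp.ne_zero
    have hy : (p : ℂ) ^ s ≠ 0 := by
      simp [Complex.cpow_def_of_ne_zero hp0, Complex.exp_ne_zero]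
    have hx : x = ((p : ℂ) ^ s)⁻¹ := by
      rw [hxdef, Complex.cpow_neg]
    have h1x : (1 : ℂ) + x ≠ 0 := by
      rw [hx]
      intro h
      field_simp at h
      exact hden (by linear_combination h)
    -- summability of shifted series
    have S0 : Summable (fun k : ℕ => τ (p ^ (k + 1)) * τ (p ^ (k + 1)) * x ^ (k + 1)) := by
      have := (summable_nat_add_iff (f := fun k : ℕ => τ (p ^ k) * τ (p ^ (k + 0)) * x ^ k) 1).2 (hsum 0)
      refine this.congr fun k => by simp
    have S1 : Summable (fun k : ℕ => τ (p ^ k) * τ (p ^ (k + 1)) * x ^ (k + 1)) := by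
      have := (hsum 1).mul_left x
      refine this.congr fun k => by ring
    have key : ∀ i : ℕ, 1 ≤ i →
        (∑' k : ℕ, τ (p ^ k) * τ (p ^ (k + i)) * x ^ k)
          = τ (p ^ i) * (∑' k : ℕ, τ (p ^ k) * τ (p ^ k) * x ^ k)
            - τ (p ^ (i - 1)) * (x * ∑' k : ℕ, τ (p ^ k) * τ (p ^ (k + 1)) * x ^ k) := by
      intro i hi
      have hA := Summable.tsum_eq_zero_add (hsum i)
      have hB := Summable.tsum_eq_zero_add (hsum 0)
      simp only [pow_zero, zero_add, hτ1, one_mul, mul_one, Nat.add_zero] at hA hB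
      have hrw : ∀ k : ℕ, τ (p ^ (k + 1)) * τ (p ^ (k + 1 + i)) * x ^ (k + 1)
          = τ (p ^ i) * (τ (p ^ (k + 1)) * τ (p ^ (k + 1)) * x ^ (k + 1))
            - τ (p ^ (i - 1)) * (τ (p ^ k) * τ (p ^ (k + 1)) * x ^ (k + 1)) := by
        intro k
        have h := hHecke p hp (k + 1) i (by omega) hi
        simp only [Nat.add_sub_cancel] at h
        rw [h]; ring
      calc ∑' k : ℕ, τ (p ^ k) * τ (p ^ (k + i)) * x ^ k
          = τ (p ^ i) + ∑' k : ℕ, τ (p ^ (k + 1)) * τ (p ^ (k + 1 + i)) * x ^ (k + 1) := hA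
        _ = τ (p ^ i) + ∑' k : ℕ, (τ (p ^ i) * (τ (p ^ (k + 1)) * τ (p ^ (k + 1)) * x ^ (k + 1))
              - τ (p ^ (i - 1)) * (τ (p ^ k) * τ (p ^ (k + 1)) * x ^ (k + 1))) := by
            rw [tsum_congr hrw]
        _ = τ (p ^ i) + (τ (p ^ i) * ∑' k : ℕ, τ (p ^ (k + 1)) * τ (p ^ (k + 1)) * x ^ (k + 1)
              - τ (p ^ (i - 1)) * ∑' k : ℕ, τ (p ^ k) * τ (p ^ (k + 1)) * x ^ (k + 1)) := by
            rw [Summable.tsum_sub (S0.mul_left _) (S1.mul_left _), tsum_mul_left, tsum_mul_left]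
        _ = τ (p ^ i) * (1 + ∑' k : ℕ, τ (p ^ (k + 1)) * τ (p ^ (k + 1)) * x ^ (k + 1))
              - τ (p ^ (i - 1)) * ∑' k : ℕ, τ (p ^ k) * τ (p ^ (k + 1)) * x ^ (k + 1) := by ring
        _ = τ (p ^ i) * (∑' k : ℕ, τ (p ^ k) * τ (p ^ k) * x ^ k)
              - τ (p ^ (i - 1)) * (x * ∑' k : ℕ, τ (p ^ k) * τ (p ^ (k + 1)) * x ^ k) := by
            rw [hB]
            rw [← tsum_mul_left (a := x)]
            congr 2
            exact tsum_congr fun k => by ring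
    set G0 : ℂ := ∑' k : ℕ, τ (p ^ k) * τ (p ^ k) * x ^ k with hG0
    set G1 : ℂ := ∑' k : ℕ, τ (p ^ k) * τ (p ^ (k + 1)) * x ^ k with hG1def
    have hkey1 := key 1 le_rfl
    simp only [pow_one, Nat.sub_self, pow_zero, hτ1, one_mul] at hkey1
    -- hkey1 : G1 = τ p * G0 - x * G1
    have hG1eq : G1 = τ p * G0 / (1 + x) := by
      rw [eq_div_iff h1x]
      linear_combination hkey1
    have hkeyν := key ν hν
    rw [hkeyν, hG1eq]
    have hpow1 : τ (p ^ 1) = τ p := by rw [pow_one]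
    rw [hx] at h1x ⊢
    field_simp
end

section
/- Let τ : ℕ → ℂ be multiplicative satisfying the Hecke relation, and let a ≥ 1 be an integer. Write F(s) = Σ_{n≥1} τ(n)² n^{-s} and F_a(s) = Σ_{n≥1} τ(n)τ(an) n^{-s}, convergent absolutely for Re(s) sufficiently large. Then F_a(s) = F(s) · Π_{p^ν ∥ a} (τ(p^ν) − τ(p)τ(p^{ν-1})/(p^s + 1)), where the product runs over primes p with p^ν exactly dividing a. -/
open scoped Complex

namespace HeckeAux

/-- Norm of `n ^ (-s)` for a positive natural `n`. -/
lemma norm_cpow (s : ℂ) {n : ℕ} (hn : 0 < n) :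
    ‖((n : ℕ) : ℂ) ^ (-s)‖ = (n : ℝ) ^ (-s.re) := by
  have : ((n : ℕ) : ℂ) = ((n : ℝ) : ℂ) := by push_cast; ring
  rw [this]
  rw [
    Complex.norm_cpow_eq_rpow_re_of_pos (by exact_mod_cast hn), Complex.neg_re]

lemma cpow_pow (s : ℂ) (p k : ℕ) :
    ((p ^ k : ℕ) : ℂ) ^ (-s) = (((p : ℕ) : ℂ) ^ (-s)) ^ k := by
  rw [Nat.cast_pow, ← Complex.natCast_cpow_natCast_mul, Complex.cpow_nat_mul]

lemma rpow_pow (σ : ℝ) (p k : ℕ) (hp : 0 < p) :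
    ((p ^ k : ℕ) : ℝ) ^ (-σ) = (((p : ℕ) : ℝ) ^ (-σ)) ^ k := by
  have hp' : (0:ℝ) ≤ (p:ℝ) := by positivity
  rw [Nat.cast_pow, ← Real.rpow_natCast ((p:ℝ)) k, ← Real.rpow_mul hp',
    mul_comm, Real.rpow_mul hp', Real.rpow_natCast]

/-- Decomposition of a positive natural into `p ^ k * m` with `p ∤ m`. -/
noncomputable def pEquiv (p : ℕ) (hp : p.Prime) :
    (ℕ × {m : ℕ+ // ¬ p ∣ (m : ℕ)}) ≃ ℕ+ where
  toFun x := ⟨p ^ x.1 * (x.2.1 : ℕ), Nat.mul_pos (pow_pos hp.pos _) x.2.1.pos⟩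
  invFun n := ((n : ℕ).factorization p,
    ⟨⟨ordCompl[p] (n : ℕ), Nat.ordCompl_pos p n.pos.ne'⟩,
      Nat.not_dvd_ordCompl hp n.pos.ne'⟩)
  left_inv := by
    rintro ⟨k, ⟨m, hm⟩⟩
    have hm0 : (m : ℕ) ≠ 0 := m.pos.ne'
    have hfac : (p ^ k * (m : ℕ)).factorization p = k := by
      rw [Nat.factorization_mul (pow_ne_zero _ hp.pos.ne') hm0]
      simp [hp.factorization_pow, Nat.factorization_eq_zero_of_not_dvd hm]
    refine Prod.ext (by simpa using hfac) (Subtype.ext (PNat.coe_injective ?_))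
    show p ^ k * (m : ℕ) / p ^ ((p ^ k * (m : ℕ)).factorization p) = (m : ℕ)
    rw [hfac, Nat.mul_div_cancel_left _ (pow_pos hp.pos k)]
  right_inv := by
    intro n
    apply PNat.coe_injective
    simp [Nat.ordProj_mul_ordCompl_eq_self]

lemma pEquiv_apply (p : ℕ) (hp : p.Prime) (k : ℕ) (m : {m : ℕ+ // ¬ p ∣ (m : ℕ)}) :
    ((pEquiv p hp (k, m) : ℕ+) : ℕ) = p ^ k * (m.1 : ℕ) := rfl

/-- Generic factorization of a tsum over `ℕ+` along the powers of a prime. -/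
lemma tsum_factor (p : ℕ) (hp : p.Prime) (u : ℕ → ℂ) (v w : ℕ+ → ℂ)
    (hw : Summable w)
    (hvp : ∀ m : ℕ+, p ∣ (m : ℕ) → v m = 0)
    (hfac : ∀ (k : ℕ) (m : ℕ+), ¬ p ∣ (m : ℕ) →
      ∀ (h : 0 < p ^ k * (m : ℕ)), w ⟨p ^ k * (m : ℕ), h⟩ = u k * v m) :
    ∑' n : ℕ+, w n = (∑' k : ℕ, u k) * (∑' m : ℕ+, v m) := by
  have he := (pEquiv p hp).tsum_eq w
  have hcong : ∀ x : ℕ × {m : ℕ+ // ¬ p ∣ (m : ℕ)},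
      w (pEquiv p hp x) = u x.1 * v x.2.1 := by
    rintro ⟨k, ⟨m, hm⟩⟩
    exact hfac k m hm _
  have hsum2 : Summable fun x : ℕ × {m : ℕ+ // ¬ p ∣ (m : ℕ)} => u x.1 * v x.2.1 :=
    (((pEquiv p hp).summable_iff (f := w)).mpr hw).congr hcong
  have hsupp : Function.support v ⊆ {m : ℕ+ | ¬ p ∣ (m : ℕ)} :=
    fun m hm hd => hm (hvp m hd)
  have hsub : ∑' m : {m : ℕ+ // ¬ p ∣ (m : ℕ)}, v m.1 = ∑' m : ℕ+, v m :=
    tsum_subtype_eq_of_support_subset hsupp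
  calc ∑' n : ℕ+, w n = ∑' x : ℕ × {m : ℕ+ // ¬ p ∣ (m : ℕ)}, w (pEquiv p hp x) :=
        he.symm
    _ = ∑' x : ℕ × {m : ℕ+ // ¬ p ∣ (m : ℕ)}, u x.1 * v x.2.1 := tsum_congr hcong
    _ = ∑' k : ℕ, ∑' m : {m : ℕ+ // ¬ p ∣ (m : ℕ)}, u k * v m.1 :=
        Summable.tsum_prod hsum2
    _ = ∑' k : ℕ, u k * ∑' m : {m : ℕ+ // ¬ p ∣ (m : ℕ)}, v m.1 := by
        refine tsum_congr fun k => ?_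
        exact tsum_mul_left
    _ = (∑' k : ℕ, u k) * ∑' m : {m : ℕ+ // ¬ p ∣ (m : ℕ)}, v m.1 := tsum_mul_right
    _ = (∑' k : ℕ, u k) * ∑' m : ℕ+, v m := by rw [hsub]

/-- Local Euler-factor identity from the Hecke relation. -/
lemma local_id (τ : ℕ → ℂ) (s : ℂ) (h1 : τ 1 = 1)
    (hHecke : ∀ q : ℕ, q.Prime → ∀ k i : ℕ, 1 ≤ k → 1 ≤ i →
      τ (q ^ (k + i)) = τ (q ^ k) * τ (q ^ i) - τ (q ^ (k - 1)) * τ (q ^ (i - 1)))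
    (p : ℕ) (hp : p.Prime) (hden : ((p : ℕ) : ℂ) ^ s + 1 ≠ 0)
    (hsum : ∀ μ : ℕ, Summable fun k : ℕ =>
      τ (p ^ k) * τ (p ^ (k + μ)) * (((p : ℕ) : ℂ) ^ (-s)) ^ k)
    (ν : ℕ) (hν : 1 ≤ ν) :
    ∑' k : ℕ, τ (p ^ k) * τ (p ^ (k + ν)) * (((p : ℕ) : ℂ) ^ (-s)) ^ k
      = (τ (p ^ ν) - τ p * τ (p ^ (ν - 1)) / (((p : ℕ) : ℂ) ^ s + 1)) *
        ∑' k : ℕ, τ (p ^ k) ^ 2 * (((p : ℕ) : ℂ) ^ (-s)) ^ k := by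
  set x : ℂ := ((p : ℕ) : ℂ) ^ (-s) with hx
  have hpC : ((p : ℕ) : ℂ) ≠ 0 := by
    exact_mod_cast Nat.cast_ne_zero.mpr hp.pos.ne'
  have hP : ((p : ℕ) : ℂ) ^ s ≠ 0 := by
    intro h
    exact hpC ((Complex.cpow_eq_zero_iff _ _).mp h).1
  have hxinv : x = (((p : ℕ) : ℂ) ^ s)⁻¹ := by rw [hx, Complex.cpow_neg]
  have hAs : Summable fun k : ℕ => τ (p ^ k) ^ 2 * x ^ k := by
    refine (hsum 0).congr fun k => ?_
    rw [add_zero]; ring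
  have hCs : Summable fun k : ℕ => τ (p ^ k) * τ (p ^ (k + 1)) * x ^ k := hsum 1
  have claim : ∀ ν : ℕ, 1 ≤ ν →
      ∑' k : ℕ, τ (p ^ k) * τ (p ^ (k + ν)) * x ^ k
        = τ (p ^ ν) * (∑' k : ℕ, τ (p ^ k) ^ 2 * x ^ k)
          - τ (p ^ (ν - 1)) * x * (∑' k : ℕ, τ (p ^ k) * τ (p ^ (k + 1)) * x ^ k) := by
    intro ν hν
    have hshift : Summable (fun k : ℕ =>
        if k = 0 then 0 else τ (p ^ (k - 1)) * τ (p ^ k) * x ^ (k - 1)) := by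
      rw [← summable_nat_add_iff 1]
      refine hCs.congr fun k => ?_
      simp
    have hfun : ∀ k : ℕ, τ (p ^ k) * τ (p ^ (k + ν)) * x ^ k
        = τ (p ^ ν) * (τ (p ^ k) ^ 2 * x ^ k)
          - τ (p ^ (ν - 1)) * x *
            (if k = 0 then 0 else τ (p ^ (k - 1)) * τ (p ^ k) * x ^ (k - 1)) := by
      intro k
      cases k with
      | zero => simp [h1]
      | succ k =>
        have hH := hHecke p hp (k + 1) ν (by omega) hν
        rw [if_neg (Nat.succ_ne_zero k), hH, Nat.add_sub_cancel]
        ring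
    calc ∑' k : ℕ, τ (p ^ k) * τ (p ^ (k + ν)) * x ^ k
        = ∑' k : ℕ, (τ (p ^ ν) * (τ (p ^ k) ^ 2 * x ^ k)
          - τ (p ^ (ν - 1)) * x *
            (if k = 0 then 0 else τ (p ^ (k - 1)) * τ (p ^ k) * x ^ (k - 1))) :=
          tsum_congr hfun
      _ = τ (p ^ ν) * (∑' k : ℕ, τ (p ^ k) ^ 2 * x ^ k)
          - τ (p ^ (ν - 1)) * x *
            (∑' k : ℕ, if k = 0 then 0 else τ (p ^ (k - 1)) * τ (p ^ k) * x ^ (k - 1)) := by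
          rw [Summable.tsum_sub (hAs.mul_left _) (hshift.mul_left _), tsum_mul_left, tsum_mul_left]
      _ = τ (p ^ ν) * (∑' k : ℕ, τ (p ^ k) ^ 2 * x ^ k)
          - τ (p ^ (ν - 1)) * x * (∑' k : ℕ, τ (p ^ k) * τ (p ^ (k + 1)) * x ^ k) := by
          congr 1
          rw [Summable.tsum_eq_zero_add hshift]
          simp
  have hC1 := claim 1 le_rfl
  rw [pow_one, pow_zero, h1, one_mul] at hC1
  set A := ∑' k : ℕ, τ (p ^ k) ^ 2 * x ^ k with hA
  set C := ∑' k : ℕ, τ (p ^ k) * τ (p ^ (k + 1)) * x ^ k with hC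
  have hC2 : C * (((p : ℕ) : ℂ) ^ s + 1) = τ p * A * ((p : ℕ) : ℂ) ^ s := by
    rw [hxinv] at hC1
    field_simp at hC1
    linear_combination hC1
  rw [claim ν hν, hxinv]
  field_simp
  linear_combination (-(τ (p ^ (ν - 1)))) * hC2

/-- Local summability. -/
lemma local_summable (τ : ℕ → ℂ) (s : ℂ)
    (hsumF' : Summable fun n : ℕ+ => ‖τ n‖ ^ 2 * ((n : ℕ) : ℝ) ^ (-s.re))
    (p : ℕ) (hp : p.Prime) (μ : ℕ) :
    Summable fun k : ℕ => ‖τ (p ^ k) * τ (p ^ (k + μ)) * (((p : ℕ) : ℂ) ^ (-s)) ^ k‖ := by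
  have hppos : 0 < p := hp.pos
  set r : ℝ := ((p : ℕ) : ℝ) ^ (-s.re) with hr
  have hr0 : 0 < r := Real.rpow_pos_of_pos (by exact_mod_cast hppos) _
  have hnorm : ∀ k : ℕ, ‖(((p : ℕ) : ℂ) ^ (-s)) ^ k‖ = r ^ k := by
    intro k; rw [norm_pow, norm_cpow s hppos]
  have hg : Summable fun k : ℕ => ‖τ (p ^ k)‖ ^ 2 * r ^ k := by
    have hinj : Function.Injective (fun k : ℕ => (⟨p ^ k, pow_pos hppos k⟩ : ℕ+)) := by
      intro k l hkl
      have h2 : p ^ k = p ^ l := congrArg (fun n : ℕ+ => (n : ℕ)) hkl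
      exact Nat.pow_right_injective hp.two_le h2
    have h3 := hsumF'.comp_injective hinj
    refine h3.congr fun k => ?_
    show ‖τ (p ^ k)‖ ^ 2 * ((p ^ k : ℕ) : ℝ) ^ (-s.re) = ‖τ (p ^ k)‖ ^ 2 * r ^ k
    rw [rpow_pow s.re p k hppos]
  have hg' : Summable fun k : ℕ => ‖τ (p ^ (k + μ))‖ ^ 2 * r ^ k := by
    have h2 : Summable fun k : ℕ => (1 / r ^ μ) * (‖τ (p ^ (k + μ))‖ ^ 2 * r ^ (k + μ)) :=
      ((summable_nat_add_iff μ).mpr hg).mul_left _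
    refine h2.congr fun k => ?_
    rw [pow_add]
    field_simp
    ring
  refine Summable.of_nonneg_of_le (fun k => norm_nonneg _) (fun k => ?_)
    ((hg.mul_left (1/2)).add (hg'.mul_left (1/2)))
  rw [norm_mul, norm_mul, hnorm]
  have h2ab := two_mul_le_add_sq ‖τ (p ^ k)‖ ‖τ (p ^ (k + μ))‖
  nlinarith [pow_nonneg hr0.le k, norm_nonneg (τ (p ^ k)), norm_nonneg (τ (p ^ (k + μ))),
    mul_le_mul_of_nonneg_right h2ab (pow_nonneg hr0.le k)]

/-- Shifted-series summability. -/
lemma shifted_summable (τ : ℕ → ℂ) (s : ℂ)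
    (hsumF' : Summable fun n : ℕ+ => ‖τ n‖ ^ 2 * ((n : ℕ) : ℝ) ^ (-s.re))
    (b : ℕ) (hb : 0 < b) :
    Summable fun n : ℕ+ => ‖τ n * τ (b * n) * ((n : ℕ) : ℂ) ^ (-s)‖ := by
  have hbR : (0 : ℝ) < (b : ℝ) := by exact_mod_cast hb
  have hcomp : Summable fun n : ℕ+ => ‖τ (b * n)‖ ^ 2 * ((b * (n : ℕ) : ℕ) : ℝ) ^ (-s.re) := by
    have hinj : Function.Injective (fun n : ℕ+ => (b.toPNat hb * n)) :=
      fun _ _ h => mul_left_cancel h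
    exact (hsumF'.comp_injective hinj).congr fun n => rfl
  have hsum2 : Summable fun n : ℕ+ => ‖τ (b * n)‖ ^ 2 * ((n : ℕ) : ℝ) ^ (-s.re) := by
    have h3 := hcomp.mul_left ((b : ℝ) ^ s.re)
    refine h3.congr fun n => ?_
    have hnR : (0 : ℝ) ≤ ((n : ℕ) : ℝ) := by positivity
    have hmulr : ((b * (n : ℕ) : ℕ) : ℝ) ^ (-s.re)
        = (b : ℝ) ^ (-s.re) * ((n : ℕ) : ℝ) ^ (-s.re) := by
      push_cast
      exact Real.mul_rpow hbR.le hnR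
    rw [hmulr, Real.rpow_neg hbR.le]
    have hbs : (b : ℝ) ^ s.re ≠ 0 := (Real.rpow_pos_of_pos hbR s.re).ne'
    field_simp
  refine Summable.of_nonneg_of_le (fun n => norm_nonneg _) (fun n => ?_)
    ((hsumF'.mul_left (1/2)).add (hsum2.mul_left (1/2)))
  rw [norm_mul, norm_mul, norm_cpow s n.pos]
  have h2ab := two_mul_le_add_sq ‖τ n‖ ‖τ (b * n)‖
  have hrp : (0 : ℝ) ≤ ((n : ℕ) : ℝ) ^ (-s.re) := by positivity
  nlinarith [norm_nonneg (τ n), norm_nonneg (τ (b * n)),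
    mul_le_mul_of_nonneg_right h2ab hrp]

/-- The key induction. -/
lemma key (τ : ℕ → ℂ) (s : ℂ) (h1 : τ 1 = 1)
    (hmul : ∀ m n : ℕ, Nat.Coprime m n → τ (m * n) = τ m * τ n)
    (hHecke : ∀ q : ℕ, q.Prime → ∀ k i : ℕ, 1 ≤ k → 1 ≤ i →
      τ (q ^ (k + i)) = τ (q ^ k) * τ (q ^ i) - τ (q ^ (k - 1)) * τ (q ^ (i - 1)))
    (hden : ∀ q : ℕ, q.Prime → (q : ℂ) ^ s + 1 ≠ 0)
    (hsumF' : Summable fun n : ℕ+ => ‖τ n‖ ^ 2 * ((n : ℕ) : ℝ) ^ (-s.re)) :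
    ∀ b : ℕ, 0 < b → ∀ c : ℕ, 0 < c → Nat.Coprime b c →
    ∑' n : ℕ+, (if Nat.Coprime n c then τ n * τ (b * n) * ((n : ℕ) : ℂ) ^ (-s) else 0)
      = (∑' n : ℕ+, (if Nat.Coprime n c then τ n ^ 2 * ((n : ℕ) : ℂ) ^ (-s) else 0)) *
        ∏ q ∈ b.primeFactors,
          (τ (q ^ (b.factorization q)) -
            τ q * τ (q ^ (b.factorization q - 1)) / ((q : ℂ) ^ s + 1)) := by
  intro b
  induction b using Nat.strong_induction_on with
  | _ b IH =>
  intro hb c hc hbc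
  by_cases hb1 : b = 1
  · subst hb1
    simp only [Nat.primeFactors_one, Finset.prod_empty, mul_one, one_mul]
    refine tsum_congr fun n => ?_
    by_cases h : Nat.Coprime (n : ℕ) c
    · simp [h, sq]
    · simp [h]
  · have hp : b.minFac.Prime := Nat.minFac_prime hb1
    set p := b.minFac with hpdef
    have hpb : p ∣ b := Nat.minFac_dvd b
    set ν := b.factorization p with hνdef
    have hν1 : 1 ≤ ν := (Nat.Prime.factorization_pos_of_dvd hp hb.ne' hpb)
    set b' := ordCompl[p] b with hb'def
    have hb'pos : 0 < b' := Nat.ordCompl_pos p hb.ne'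
    have hbfac : p ^ ν * b' = b := Nat.ordProj_mul_ordCompl_eq_self b p
    have hpb' : ¬ p ∣ b' := Nat.not_dvd_ordCompl hp hb.ne'
    have hb'lt : b' < b := by
      have hgt : 1 < p ^ ν := Nat.one_lt_pow (by omega) hp.one_lt
      calc b' < p ^ ν * b' := (lt_mul_iff_one_lt_left hb'pos).mpr hgt
        _ = b := hbfac
    have hpc : Nat.Coprime p c := Nat.Coprime.coprime_dvd_left hpb hbc
    have hb'c : Nat.Coprime b' (p * c) := by
      have h1' : Nat.Coprime b' p := ((hp.coprime_iff_not_dvd).mpr hpb').symm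
      have h2' : Nat.Coprime b' c := Nat.Coprime.coprime_dvd_left (Nat.ordCompl_dvd b p) hbc
      exact Nat.Coprime.mul_right h1' h2'
    -- summability of indicator series
    have hindS : ∀ (b₀ : ℕ), 0 < b₀ → ∀ c₀ : ℕ, Summable (fun n : ℕ+ =>
        if Nat.Coprime (n : ℕ) c₀ then τ n * τ (b₀ * n) * ((n : ℕ) : ℂ) ^ (-s) else 0) := by
      intro b₀ hb₀ c₀
      refine Summable.of_norm_bounded (shifted_summable τ s hsumF' b₀ hb₀) fun n => ?_
      by_cases h : Nat.Coprime (n : ℕ) c₀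
      · rw [if_pos h]
      · rw [if_neg h, norm_zero]; positivity
    -- first factorization: shifted series
    have hfac1 : ∑' n : ℕ+, (if Nat.Coprime (n : ℕ) c then τ n * τ (b * n) * ((n : ℕ) : ℂ) ^ (-s) else 0)
        = (∑' k : ℕ, τ (p ^ k) * τ (p ^ (k + ν)) * (((p : ℕ) : ℂ) ^ (-s)) ^ k) *
          (∑' m : ℕ+, (if Nat.Coprime (m : ℕ) (p * c) then τ m * τ (b' * m) * ((m : ℕ) : ℂ) ^ (-s) else 0)) := by
      refine tsum_factor p hp _ _ _ (hindS b hb c) ?_ ?_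
      · intro m hm
        rw [if_neg]
        intro hcop
        exact ((hp.coprime_iff_not_dvd).mp
          ((Nat.Coprime.coprime_dvd_right (dvd_mul_right p c) hcop).symm)) hm
      · intro k m hm h
        have hcpm : Nat.Coprime p (m : ℕ) := (hp.coprime_iff_not_dvd).mpr hm
        have hcopkm : Nat.Coprime (p ^ k) (m : ℕ) := Nat.Coprime.pow_left k hcpm
        show (if Nat.Coprime (p ^ k * (m : ℕ)) c then
            τ (p ^ k * (m : ℕ)) * τ (b * (p ^ k * (m : ℕ))) * ((p ^ k * (m : ℕ) : ℕ) : ℂ) ^ (-s) else 0)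
          = τ (p ^ k) * τ (p ^ (k + ν)) * (((p : ℕ) : ℂ) ^ (-s)) ^ k *
            (if Nat.Coprime (m : ℕ) (p * c) then τ m * τ (b' * m) * ((m : ℕ) : ℂ) ^ (-s) else 0)
        by_cases hmc : Nat.Coprime (m : ℕ) c
        · rw [if_pos (Nat.coprime_mul_iff_left.mpr ⟨Nat.Coprime.pow_left k hpc, hmc⟩),
            if_pos (Nat.coprime_mul_iff_right.mpr ⟨hcpm.symm, hmc⟩)]
          have e1 : τ (p ^ k * (m : ℕ)) = τ (p ^ k) * τ m := hmul _ _ hcopkm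
          have e2 : b * (p ^ k * (m : ℕ)) = p ^ (k + ν) * (b' * (m : ℕ)) := by
            rw [← hbfac]; ring
          have e3 : τ (p ^ (k + ν) * (b' * (m : ℕ))) = τ (p ^ (k + ν)) * τ (b' * (m : ℕ)) := by
            refine hmul _ _ (Nat.Coprime.pow_left _ (Nat.Coprime.mul_right ?_ hcpm))
            exact (hp.coprime_iff_not_dvd).mpr hpb'
          have e4 : ((p ^ k * (m : ℕ) : ℕ) : ℂ) ^ (-s)
              = (((p : ℕ) : ℂ) ^ (-s)) ^ k * ((m : ℕ) : ℂ) ^ (-s) := by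
            rw [Nat.cast_mul, Complex.natCast_mul_natCast_cpow, cpow_pow]
          rw [e1, e2, e3, e4]
          ring
        · rw [if_neg, if_neg, mul_zero]
          · intro hcop
            exact hmc (Nat.Coprime.coprime_dvd_right (dvd_mul_left c p) hcop)
          · intro hcop
            exact hmc (Nat.Coprime.coprime_dvd_left (dvd_mul_left (m : ℕ) (p ^ k)) hcop)
    -- second factorization: square series
    have hindSq : ∀ c₀ : ℕ, Summable (fun n : ℕ+ =>
        if Nat.Coprime (n : ℕ) c₀ then τ n ^ 2 * ((n : ℕ) : ℂ) ^ (-s) else 0) := by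
      intro c₀
      refine Summable.of_norm_bounded hsumF' fun n => ?_
      by_cases h : Nat.Coprime (n : ℕ) c₀
      · rw [if_pos h, norm_mul, norm_pow, norm_cpow s n.pos]
      · rw [if_neg h, norm_zero]; positivity
    have hfac2 : ∑' n : ℕ+, (if Nat.Coprime (n : ℕ) c then τ n ^ 2 * ((n : ℕ) : ℂ) ^ (-s) else 0)
        = (∑' k : ℕ, τ (p ^ k) ^ 2 * (((p : ℕ) : ℂ) ^ (-s)) ^ k) *
          (∑' m : ℕ+, (if Nat.Coprime (m : ℕ) (p * c) then τ m ^ 2 * ((m : ℕ) : ℂ) ^ (-s) else 0)) := by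
      refine tsum_factor p hp _ _ _ (hindSq c) ?_ ?_
      · intro m hm
        rw [if_neg]
        intro hcop
        exact ((hp.coprime_iff_not_dvd).mp
          ((Nat.Coprime.coprime_dvd_right (dvd_mul_right p c) hcop).symm)) hm
      · intro k m hm h
        have hcpm : Nat.Coprime p (m : ℕ) := (hp.coprime_iff_not_dvd).mpr hm
        have hcopkm : Nat.Coprime (p ^ k) (m : ℕ) := Nat.Coprime.pow_left k hcpm
        show (if Nat.Coprime (p ^ k * (m : ℕ)) c then
            τ (p ^ k * (m : ℕ)) ^ 2 * ((p ^ k * (m : ℕ) : ℕ) : ℂ) ^ (-s) else 0)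
          = τ (p ^ k) ^ 2 * (((p : ℕ) : ℂ) ^ (-s)) ^ k *
            (if Nat.Coprime (m : ℕ) (p * c) then τ m ^ 2 * ((m : ℕ) : ℂ) ^ (-s) else 0)
        by_cases hmc : Nat.Coprime (m : ℕ) c
        · rw [if_pos (Nat.coprime_mul_iff_left.mpr ⟨Nat.Coprime.pow_left k hpc, hmc⟩),
            if_pos (Nat.coprime_mul_iff_right.mpr ⟨hcpm.symm, hmc⟩)]
          have e1 : τ (p ^ k * (m : ℕ)) = τ (p ^ k) * τ m := hmul _ _ hcopkm
          have e4 : ((p ^ k * (m : ℕ) : ℕ) : ℂ) ^ (-s)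
              = (((p : ℕ) : ℂ) ^ (-s)) ^ k * ((m : ℕ) : ℂ) ^ (-s) := by
            rw [Nat.cast_mul, Complex.natCast_mul_natCast_cpow, cpow_pow]
          rw [e1, e4]
          ring
        · rw [if_neg, if_neg, mul_zero]
          · intro hcop
            exact hmc (Nat.Coprime.coprime_dvd_right (dvd_mul_left c p) hcop)
          · intro hcop
            exact hmc (Nat.Coprime.coprime_dvd_left (dvd_mul_left (m : ℕ) (p ^ k)) hcop)
    -- local identity
    have hloc := local_id τ s h1 hHecke p hp (hden p hp)
      (fun μ => summable_norm_iff.mp (local_summable τ s hsumF' p hp μ)) ν hν1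
    -- induction hypothesis
    have hIH := IH b' hb'lt hb'pos (p * c) (Nat.mul_pos hp.pos hc) hb'c
    -- product decomposition
    have hpnot : p ∉ b'.primeFactors := fun h => hpb' (Nat.dvd_of_mem_primeFactors h)
    have hPF : b.primeFactors = insert p b'.primeFactors := by
      conv_lhs => rw [← hbfac]
      rw [Nat.primeFactors_mul (pow_ne_zero _ hp.pos.ne') hb'pos.ne',
        Nat.primeFactors_prime_pow (k := ν) (by omega) hp]
      exact (Finset.insert_eq p b'.primeFactors).symm
    have hfq : ∀ q ∈ b'.primeFactors, b.factorization q = b'.factorization q := by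
      intro q hq
      have hqp : q ≠ p := fun h => hpnot (h ▸ hq)
      conv_lhs => rw [← hbfac]
      rw [Nat.factorization_mul (pow_ne_zero _ hp.pos.ne') hb'pos.ne']
      simp [hp.factorization_pow, Finsupp.single_apply, hqp.symm]
    have hprod : ∏ q ∈ b.primeFactors,
          (τ (q ^ (b.factorization q)) -
            τ q * τ (q ^ (b.factorization q - 1)) / ((q : ℂ) ^ s + 1))
        = (τ (p ^ ν) - τ p * τ (p ^ (ν - 1)) / (((p : ℕ) : ℂ) ^ s + 1)) *
          ∏ q ∈ b'.primeFactors,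
            (τ (q ^ (b'.factorization q)) -
              τ q * τ (q ^ (b'.factorization q - 1)) / ((q : ℂ) ^ s + 1)) := by
      rw [hPF, Finset.prod_insert hpnot]
      congr 1
      exact Finset.prod_congr rfl fun q hq => by rw [hfq q hq]
    rw [hfac1, hloc, hfac2, hIH, hprod]
    ring

end HeckeAux

/-- For a multiplicative function satisfying the Hecke relation,
`F_a(s) = F(s) ∏_{p^ν ∥ a} (τ(p^ν) − τ(p)τ(p^{ν-1})/(p^s+1))`. -/
theorem hecke_shifted_dirichlet_series (τ : ℕ → ℂ)
    (hmul : ∀ m n : ℕ, Nat.Coprime m n → τ (m * n) = τ m * τ n)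
    (hHecke : ∀ q : ℕ, q.Prime → ∀ k i : ℕ, 1 ≤ k → 1 ≤ i →
      τ (q ^ (k + i)) = τ (q ^ k) * τ (q ^ i) - τ (q ^ (k - 1)) * τ (q ^ (i - 1)))
    (a : ℕ) (ha : 1 ≤ a) (s : ℂ)
    (hsumF : Summable (fun n : ℕ+ => τ n ^ 2 * ((n : ℕ) : ℂ) ^ (-s)))
    (hsumFa : Summable (fun n : ℕ+ => τ n * τ (a * n) * ((n : ℕ) : ℂ) ^ (-s)))
    (hden : ∀ q : ℕ, q.Prime → (q : ℂ) ^ s + 1 ≠ 0) :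
    ∑' n : ℕ+, τ n * τ (a * n) * ((n : ℕ) : ℂ) ^ (-s)
      = (∑' n : ℕ+, τ n ^ 2 * ((n : ℕ) : ℂ) ^ (-s)) *
        ∏ q ∈ a.primeFactors,
          (τ (q ^ (a.factorization q)) -
            τ q * τ (q ^ (a.factorization q - 1)) / ((q : ℂ) ^ s + 1)) := by
  by_cases h1 : τ 1 = 0
  · have hz : ∀ n : ℕ, τ n = 0 := by
      intro n
      have := hmul n 1 (Nat.coprime_one_right n)
      simpa [h1] using this
    simp [hz]
  · have h1' : τ 1 = 1 := by
      have h := hmul 1 1 (Nat.coprime_one_right 1)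
      rw [mul_one] at h
      have h2 : τ 1 * 1 = τ 1 * τ 1 := by rw [mul_one]; exact h
      exact (mul_left_cancel₀ h1 h2).symm
    have hsumF' : Summable fun n : ℕ+ => ‖τ n‖ ^ 2 * ((n : ℕ) : ℝ) ^ (-s.re) := by
      have := summable_norm_iff.mpr hsumF
      refine this.congr fun n => ?_
      rw [norm_mul, norm_pow, HeckeAux.norm_cpow s n.pos]
    have hkey := HeckeAux.key τ s h1' hmul hHecke hden hsumF' a ha 1 one_pos
      (Nat.coprime_one_right a)
    simpa using hkey
end

section
/- Define for integers κ, λ ≥ 0 and a real number G the quantity L_{κ,λ} = Σ_ν ν! C(κ,ν) C(λ,ν) m_{κ−ν} m_{λ−ν} G^ν, where the sum runs over 0 ≤ ν ≤ min(κ,λ) with ν ≡ κ ≡ λ (mod 2), and m_j denotes the j-th standard Gaussian moment (m_j = 0 for odd j, m_j = j!/(2^{j/2}(j/2)!) for even j), with L_{κ,λ} = 0 if κ + λ is odd. Then the double exponential generating function satisfies Σ_{κ,λ ≥ 0} L_{κ,λ} U^κ V^λ / (κ! λ!) = exp(U²/2 + G·U·V + V²/2) as an identity of formal power series in U, V. 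-/
/-- The `j`-th moment of the standard Gaussian: `0` for odd `j`,
`j!/(2^(j/2) (j/2)!)` for even `j`. -/
noncomputable def gaussMoment (j : ℕ) : ℝ :=
  if Even j then (Nat.factorial j : ℝ) / (2 ^ (j / 2) * Nat.factorial (j / 2)) else 0

/-- `L_{κ,λ} = Σ_ν ν! C(κ,ν) C(λ,ν) m_{κ−ν} m_{λ−ν} G^ν` over `0 ≤ ν ≤ min(κ,λ)`
with `ν ≡ κ ≡ λ (mod 2)`; it is `0` when `κ + λ` is odd (empty sum). -/
noncomputable def Lmix (G : ℝ) (κ lam : ℕ) : ℝ :=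
  ∑ ν ∈ (Finset.range (min κ lam + 1)).filter
      (fun ν => ν % 2 = κ % 2 ∧ κ % 2 = lam % 2),
    (Nat.factorial ν : ℝ) * (κ.choose ν) * (lam.choose ν) *
      gaussMoment (κ - ν) * gaussMoment (lam - ν) * G ^ ν

noncomputable def bcoef (U : ℝ) (j : ℕ) : ℝ := gaussMoment j * U ^ j / (Nat.factorial j)

lemma bcoef_even (U : ℝ) (m : ℕ) : bcoef U (2 * m) = (U ^ 2 / 2) ^ m / (Nat.factorial m) := by
  have hm : (2 * m) / 2 = m := by omega
  have he : Even (2 * m) := even_two_mul m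
  have h1 : ((2 * m).factorial : ℝ) ≠ 0 := Nat.cast_ne_zero.mpr (2 * m).factorial_ne_zero
  have h2 : (m.factorial : ℝ) ≠ 0 := Nat.cast_ne_zero.mpr m.factorial_ne_zero
  have h3 : (2 : ℝ) ^ m ≠ 0 := by positivity
  rw [bcoef, gaussMoment, if_pos he, hm, pow_mul, div_pow]
  field_simp

lemma bcoef_odd (U : ℝ) {j : ℕ} (h : ¬ Even j) : bcoef U j = 0 := by
  rw [bcoef, gaussMoment, if_neg h]; simp

lemma summable_norm_bcoef (U : ℝ) : Summable fun j => ‖bcoef U j‖ := by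
  have hinj : Function.Injective (fun m : ℕ => 2 * m) := fun a b h => by simpa using h
  rw [← hinj.summable_iff (f := fun j => ‖bcoef U j‖)]
  · apply Summable.congr (Real.summable_pow_div_factorial |U ^ 2 / 2|)
    intro m
    simp [Function.comp, bcoef_even, abs_div, abs_pow, Nat.abs_cast]
  · intro j hj
    have : ¬ Even j := by
      simp only [Set.mem_range] at hj
      intro ⟨m, hm⟩; exact hj ⟨m, by omega⟩
    simp [bcoef_odd U this]

lemma tsum_bcoef (U : ℝ) : ∑' j, bcoef U j = Real.exp (U ^ 2 / 2) := by
  have hinj : Function.Injective (fun m : ℕ => 2 * m) := fun a b h => by simpa using h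
  have hsupp : Function.support (bcoef U) ⊆ Set.range (fun m : ℕ => 2 * m) := by
    intro j hj
    by_contra hn
    have : ¬ Even j := by
      intro ⟨m, hm⟩; exact hn ⟨m, by simp; omega⟩
    exact hj (bcoef_odd U this)
  rw [← hinj.tsum_eq hsupp]
  simp only [bcoef_even]
  rw [Real.exp_eq_exp_ℝ, NormedSpace.exp_eq_tsum_div]



noncomputable instance : Finset.HasAntidiagonal (ℕ × ℕ) := Finset.HasAntidiagonal.antidiagonalOfLocallyFinite

lemma gm_ne_zero_even {j : ℕ} (h : gaussMoment j ≠ 0) : Even j := by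
  by_contra hn; exact h (by rw [gaussMoment, if_neg hn])

lemma key (G U V : ℝ) (κ lam : ℕ) :
    ∑ kl ∈ Finset.HasAntidiagonal.antidiagonal ((κ, lam) : ℕ × ℕ),
        (if kl.1.1 = kl.1.2 then (G * U * V) ^ kl.1.1 / (Nat.factorial kl.1.1) else 0) *
          (bcoef U kl.2.1 * bcoef V kl.2.2)
      = Lmix G κ lam * U ^ κ * V ^ lam / (Nat.factorial κ) / (Nat.factorial lam) := by
  have step1 : ∑ kl ∈ Finset.HasAntidiagonal.antidiagonal ((κ, lam) : ℕ × ℕ),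
        (if kl.1.1 = kl.1.2 then (G * U * V) ^ kl.1.1 / (Nat.factorial kl.1.1) else 0) *
          (bcoef U kl.2.1 * bcoef V kl.2.2)
      = ∑ ν ∈ Finset.range (min κ lam + 1),
          (G * U * V) ^ ν / (Nat.factorial ν) * (bcoef U (κ - ν) * bcoef V (lam - ν)) := by
    rw [← Finset.sum_filter_add_sum_filter_not (Finset.HasAntidiagonal.antidiagonal ((κ, lam) : ℕ × ℕ))
      (fun kl => kl.1.1 = kl.1.2)]
    have hz : ∑ kl ∈ (Finset.HasAntidiagonal.antidiagonal ((κ, lam) : ℕ × ℕ)).filter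
        (fun kl => ¬ kl.1.1 = kl.1.2),
        (if kl.1.1 = kl.1.2 then (G * U * V) ^ kl.1.1 / (Nat.factorial kl.1.1) else 0) *
          (bcoef U kl.2.1 * bcoef V kl.2.2) = 0 := by
      apply Finset.sum_eq_zero
      intro kl hkl
      rw [Finset.mem_filter] at hkl
      rw [if_neg hkl.2, zero_mul]
    rw [hz, add_zero]
    apply Finset.sum_nbij' (i := fun kl => kl.1.1) (j := fun ν => ((ν, ν), (κ - ν, lam - ν)))
    · intro kl hkl
      simp only [Finset.mem_filter, Finset.HasAntidiagonal.mem_antidiagonal, Prod.ext_iff, Prod.fst_add,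
        Prod.snd_add] at hkl
      simp only [Finset.mem_range]
      omega
    · intro ν hν
      simp only [Finset.mem_range] at hν
      simp only [Finset.mem_filter, Finset.HasAntidiagonal.mem_antidiagonal, Prod.ext_iff, Prod.fst_add,
        Prod.snd_add]
      refine ⟨⟨?_, ?_⟩, trivial⟩ <;> omega
    · intro kl hkl
      simp only [Finset.mem_filter, Finset.HasAntidiagonal.mem_antidiagonal, Prod.ext_iff, Prod.fst_add,
        Prod.snd_add] at hkl
      obtain ⟨⟨h1, h2⟩, h3⟩ := hkl
      have e1 : κ - kl.1.1 = kl.2.1 := by omega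
      have e2 : lam - kl.1.1 = kl.2.2 := by omega
      have e3 : kl.1.1 = kl.1.2 := h3
      ext <;> simp [e1, e2, ← e3]
    · intro ν hν; rfl
    · intro kl hkl
      simp only [Finset.mem_filter, Finset.HasAntidiagonal.mem_antidiagonal, Prod.ext_iff, Prod.fst_add,
        Prod.snd_add] at hkl
      obtain ⟨⟨h1, h2⟩, h3⟩ := hkl
      rw [if_pos h3]
      have e1 : κ - kl.1.1 = kl.2.1 := by omega
      have e2 : lam - kl.1.1 = kl.2.2 := by omega
      rw [e1, e2]
  rw [step1]
  rw [Lmix, Finset.sum_mul, Finset.sum_mul, Finset.sum_div, Finset.sum_div]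
  rw [← Finset.sum_filter_of_ne (p := fun ν => ν % 2 = κ % 2 ∧ κ % 2 = lam % 2)]
  · apply Finset.sum_congr rfl
    intro ν hν
    rw [Finset.mem_filter, Finset.mem_range] at hν
    have hνκ : ν ≤ κ := by omega
    have hνlam : ν ≤ lam := by omega
    obtain ⟨i, rfl⟩ : ∃ i, κ = ν + i := ⟨κ - ν, by omega⟩
    obtain ⟨j, rfl⟩ : ∃ j, lam = ν + j := ⟨lam - ν, by omega⟩
    rw [Nat.add_sub_cancel_left, Nat.add_sub_cancel_left]
    rw [Nat.cast_choose ℝ (Nat.le_add_right ν i), Nat.cast_choose ℝ (Nat.le_add_right ν j)]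
    rw [Nat.add_sub_cancel_left, Nat.add_sub_cancel_left, bcoef, bcoef]
    have f1 : ((ν + i).factorial : ℝ) ≠ 0 := Nat.cast_ne_zero.mpr (Nat.factorial_ne_zero _)
    have f2 : ((ν + j).factorial : ℝ) ≠ 0 := Nat.cast_ne_zero.mpr (Nat.factorial_ne_zero _)
    have f3 : (ν.factorial : ℝ) ≠ 0 := Nat.cast_ne_zero.mpr (Nat.factorial_ne_zero _)
    have f4 : (i.factorial : ℝ) ≠ 0 := Nat.cast_ne_zero.mpr (Nat.factorial_ne_zero _)
    have f5 : (j.factorial : ℝ) ≠ 0 := Nat.cast_ne_zero.mpr (Nat.factorial_ne_zero _)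
    rw [pow_add U, pow_add V, mul_pow, mul_pow]
    field_simp
  · intro ν hν hne
    rw [Finset.mem_range] at hν
    have hg1 : gaussMoment (κ - ν) ≠ 0 := by
      intro h
      exact hne (by simp [bcoef, h])
    have hg2 : gaussMoment (lam - ν) ≠ 0 := by
      intro h
      exact hne (by simp [bcoef, h])
    have he1 := gm_ne_zero_even hg1
    have he2 := gm_ne_zero_even hg2
    rw [Nat.even_iff] at he1 he2
    omega


noncomputable def acoef (x : ℝ) (q : ℕ × ℕ) : ℝ :=
  if q.1 = q.2 then x ^ q.1 / (Nat.factorial q.1) else 0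

lemma summable_norm_acoef (x : ℝ) : Summable fun q => ‖acoef x q‖ := by
  have hinj : Function.Injective (fun n : ℕ => ((n, n) : ℕ × ℕ)) := by
    intro a b h; simpa using congrArg Prod.fst h
  rw [← hinj.summable_iff (f := fun q => ‖acoef x q‖)]
  · apply Summable.congr (Real.summable_pow_div_factorial |x|)
    intro n
    simp [Function.comp, acoef, abs_div, abs_pow, Nat.abs_cast]
  · intro q hq
    have : ¬ q.1 = q.2 := by
      intro h
      exact hq ⟨q.1, by ext <;> simp [h]⟩
    simp [acoef, this]

lemma tsum_acoef (x : ℝ) : ∑' q : ℕ × ℕ, acoef x q = Real.exp x := by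
  have hinj : Function.Injective (fun n : ℕ => ((n, n) : ℕ × ℕ)) := by
    intro a b h; simpa using congrArg Prod.fst h
  have hsupp : Function.support (acoef x) ⊆ Set.range (fun n : ℕ => ((n, n) : ℕ × ℕ)) := by
    intro q hq
    by_contra hn
    have : ¬ q.1 = q.2 := by
      intro h
      exact hn ⟨q.1, by ext <;> simp [h]⟩
    exact hq (by simp [acoef, this])
  rw [← hinj.tsum_eq hsupp]
  have hdiag : ∀ n : ℕ, acoef x ((fun n : ℕ => ((n, n) : ℕ × ℕ)) n) = x ^ n / (Nat.factorial n) :=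
    fun n => if_pos rfl
  rw [tsum_congr hdiag, Real.exp_eq_exp_ℝ, NormedSpace.exp_eq_tsum_div]

set_option maxHeartbeats 1000000 in
/-- The double exponential generating function of the `L_{κ,λ}` equals
`exp(U²/2 + G U V + V²/2)`. -/
theorem Lmix_exponential_generating_function (G : ℝ) (U V : ℝ) :
    ∑' p : ℕ × ℕ,
        Lmix G p.1 p.2 * U ^ p.1 * V ^ p.2 /
          (Nat.factorial p.1) / (Nat.factorial p.2)
      = Real.exp (U ^ 2 / 2 + G * U * V + V ^ 2 / 2) := by
  have hA : Summable fun q => ‖acoef (G * U * V) q‖ := summable_norm_acoef _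
  have hbU : Summable fun j => ‖bcoef U j‖ := summable_norm_bcoef U
  have hbV : Summable fun j => ‖bcoef V j‖ := summable_norm_bcoef V
  have hB : Summable fun r : ℕ × ℕ => ‖bcoef U r.1 * bcoef V r.2‖ := hbU.mul_norm hbV
  have hAB : Summable fun z : (ℕ × ℕ) × (ℕ × ℕ) =>
      acoef (G * U * V) z.1 * (bcoef U z.2.1 * bcoef V z.2.2) :=
    summable_mul_of_summable_norm hA hB
  have cauchy := Summable.tsum_mul_tsum_eq_tsum_sum_antidiagonal hA.of_norm hB.of_norm hAB
  have hprod : ∑' r : ℕ × ℕ, bcoef U r.1 * bcoef V r.2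
      = Real.exp (U ^ 2 / 2) * Real.exp (V ^ 2 / 2) := by
    rw [← tsum_mul_tsum_of_summable_norm hbU hbV, tsum_bcoef, tsum_bcoef]
  have lhs_eq : (∑' p : ℕ × ℕ,
        Lmix G p.1 p.2 * U ^ p.1 * V ^ p.2 /
          (Nat.factorial p.1) / (Nat.factorial p.2))
      = ∑' n : ℕ × ℕ, ∑ kl ∈ Finset.HasAntidiagonal.antidiagonal n,
          acoef (G * U * V) kl.1 * (bcoef U kl.2.1 * bcoef V kl.2.2) := by
    apply tsum_congr
    intro n
    rw [← key G U V n.1 n.2]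
    rfl
  rw [lhs_eq, ← cauchy, tsum_acoef, hprod, ← Real.exp_add, ← Real.exp_add]
  ring_nf
end
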